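/- The parallel-beam projection of the pixel basis with box detector blur is a 3-direction box spline: for viewing angle θ with sin θ ≠ 0, cos θ ≠ 0, and bin width τ > 0, the function s ↦ ∫_{s−τ/2}^{s+τ/2} R_u{1_{[0,1)²}}(r) dr / τ equals the 3-fold convolution M_{|sin θ|} * M_{|cos θ|} * M_τ evaluated at an appropriately shifted argument, and in particular it is given by the second-order truncated-power formula Δ_{a}Δ_{b}Δ_{τ}(s)₊²/(2·a·b·τ) with a = |sin θ|, b = |cos θ| (after centering shifts). -/

import Mathlib

open MeasureTheory

/-- Normalized indicator of `[0, a)`: the 1-D elementary box spline `M_a`. -/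
noncomputable def Mbox (a : ℝ) (s : ℝ) : ℝ :=
  (Set.Ico (0:ℝ) a).indicator (fun _ => 1 / a) s

/-- Convolution of real functions on ℝ. -/
noncomputable def conv1d (f g : ℝ → ℝ) (s : ℝ) : ℝ := ∫ t : ℝ, f t * g (s - t)

/-- Backward-difference operator `Δ_h g(s) = g(s) − g(s − h)`. -/
def diffOp (h : ℝ) (g : ℝ → ℝ) (s : ℝ) : ℝ := g s - g (s - h)

private lemma toReal_ofReal_eq_max (x : ℝ) : (ENNReal.ofReal x).toReal = max x 0 := by
  rcases le_total 0 x with h | h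
  · rw [ENNReal.toReal_ofReal h, max_eq_left h]
  · rw [ENNReal.ofReal_eq_zero.2 h, ENNReal.toReal_zero, max_eq_right h]

private lemma vol_inter (c u v : ℝ) (hc : 0 < c) (huv : u ≤ v) :
    (volume (Set.Ico 0 c ∩ Set.Ioc u v)).toReal
      = (max v 0 - max (v-c) 0) - (max u 0 - max (u-c) 0) := by
  have h1 : Set.Ioo (max u 0) (min v c) ⊆ Set.Ico 0 c ∩ Set.Ioc u v := by
    rintro x ⟨hx1, hx2⟩
    exact ⟨⟨le_trans (le_max_right u 0) hx1.le, lt_of_lt_of_le hx2 (min_le_right _ _)⟩,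
      ⟨lt_of_le_of_lt (le_max_left u 0) hx1, le_trans hx2.le (min_le_left _ _)⟩⟩
  have h2 : Set.Ico 0 c ∩ Set.Ioc u v ⊆ Set.Icc (max u 0) (min v c) := by
    rintro x ⟨⟨hx1, hx2⟩, hx3, hx4⟩
    exact ⟨max_le hx3.le hx1, le_min hx4 hx2.le⟩
  have hvol : volume (Set.Ico 0 c ∩ Set.Ioc u v)
      = ENNReal.ofReal (min v c - max u 0) := by
    refine le_antisymm ?_ ?_
    · calc volume (Set.Ico 0 c ∩ Set.Ioc u v) ≤ volume (Set.Icc (max u 0) (min v c)) :=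
          measure_mono h2
        _ = ENNReal.ofReal (min v c - max u 0) := Real.volume_Icc
    · calc ENNReal.ofReal (min v c - max u 0) = volume (Set.Ioo (max u 0) (min v c)) :=
          Real.volume_Ioo.symm
        _ ≤ _ := measure_mono h1
  rw [hvol, toReal_ofReal_eq_max]
  simp only [max_def, min_def]
  split_ifs <;> linarith

private lemma integral_ind_aux (c : ℝ) (hc : 0 < c) (u v : ℝ) (huv : u ≤ v) :
    ∫ x in u..v, (Set.Ico (0:ℝ) c).indicator (fun _ => (1:ℝ)) x
      = (max v 0 - max (v-c) 0) - (max u 0 - max (u-c) 0) := by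
  rw [intervalIntegral.integral_of_le huv,
    ← MeasureTheory.integral_indicator measurableSet_Ioc]
  have h1 : ∀ x : ℝ, (Set.Ioc u v).indicator
        ((Set.Ico (0:ℝ) c).indicator (fun _ => (1:ℝ))) x
      = ((Set.Ico (0:ℝ) c) ∩ Set.Ioc u v).indicator (fun _ => (1:ℝ)) x := by
    intro x
    simp only [Set.indicator_apply, Set.mem_inter_iff, Set.mem_Ioc, Set.mem_Ico]
    split_ifs <;> tauto
  simp_rw [h1]
  have h2 : ∫ x : ℝ, ((Set.Ico (0:ℝ) c) ∩ Set.Ioc u v).indicator (fun _ => (1:ℝ)) x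
      = (volume ((Set.Ico (0:ℝ) c) ∩ Set.Ioc u v)).toReal := by
    exact MeasureTheory.integral_indicator_one
      ((measurableSet_Ico (a := (0:ℝ)) (b := c)).inter (measurableSet_Ioc (a := u) (b := v)))
  rw [h2, vol_inter c u v hc huv]

private lemma integral_ind (c : ℝ) (hc : 0 < c) (u v : ℝ) :
    ∫ x in u..v, (Set.Ico (0:ℝ) c).indicator (fun _ => (1:ℝ)) x
      = (max v 0 - max (v-c) 0) - (max u 0 - max (u-c) 0) := by
  rcases le_total u v with h | h
  · exact integral_ind_aux c hc u v h
  · rw [intervalIntegral.integral_symm, integral_ind_aux c hc v u h]; ring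

private lemma hasDerivAt_maxsq (x : ℝ) :
    HasDerivAt (fun y : ℝ => (max y 0)^2 / 2) (max x 0) x := by
  rcases lt_trichotomy x 0 with hx | hx | hx
  · have h : (fun y : ℝ => (max y 0)^2 / 2) =ᶠ[nhds x] fun _ => (0:ℝ) := by
      filter_upwards [Iio_mem_nhds hx] with y hy
      have : y < 0 := hy
      simp [max_eq_right this.le]
    have := (hasDerivAt_const x (0:ℝ)).congr_of_eventuallyEq h
    simpa [max_eq_right hx.le] using this
  · subst hx
    rw [hasDerivAt_iff_tendsto_slope]
    have h : (slope (fun y : ℝ => (max y 0)^2 / 2) 0) =ᶠ[nhdsWithin 0 {(0:ℝ)}ᶜ]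
        fun y => max y 0 / 2 := by
      filter_upwards [self_mem_nhdsWithin] with y hy
      have hy' : y ≠ 0 := hy
      rw [slope_def_field]
      rcases lt_or_gt_of_ne hy' with h | h
      · simp [max_eq_right h.le]
      · rw [max_eq_left h.le, max_self]
        field_simp
        ring
    refine Filter.Tendsto.congr' h.symm ?_
    have : Filter.Tendsto (fun y : ℝ => max y 0 / 2) (nhds 0) (nhds (max 0 0 / 2)) :=
      (continuous_id.max continuous_const).div_const 2 |>.continuousAt
    simpa using this.mono_left nhdsWithin_le_nhds
  · have h : (fun y : ℝ => (max y 0)^2 / 2) =ᶠ[nhds x] fun y => y^2 / 2 := by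
      filter_upwards [Ioi_mem_nhds hx] with y hy
      have : 0 < y := hy
      simp [max_eq_left this.le]
    have h2 : HasDerivAt (fun y : ℝ => y^2 / 2) x x := by
      simpa using ((hasDerivAt_pow 2 x).div_const 2)
    have := h2.congr_of_eventuallyEq h
    simpa [max_eq_left hx.le] using this

private lemma integral_max (u v : ℝ) :
    ∫ x in u..v, max x 0 = (max v 0)^2 / 2 - (max u 0)^2 / 2 :=
  intervalIntegral.integral_eq_sub_of_hasDerivAt
    (fun x _ => hasDerivAt_maxsq x)
    ((continuous_id.max continuous_const).intervalIntegrable u v)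

private lemma integral_max_sub (u v k : ℝ) :
    ∫ x in u..v, max (x - k) 0 = (max (v-k) 0)^2 / 2 - (max (u-k) 0)^2 / 2 := by
  rw [intervalIntegral.integral_comp_sub_right (fun x => max x 0) k, integral_max]

private lemma integral_max_add (u v k : ℝ) :
    ∫ x in u..v, max (x + k) 0 = (max (v+k) 0)^2 / 2 - (max (u+k) 0)^2 / 2 := by
  rw [intervalIntegral.integral_comp_add_right (fun x => max x 0) k, integral_max]

private lemma max_div_pos (x d : ℝ) (hd : 0 < d) : max (x/d) 0 = max x 0 / d := by
  conv_lhs => rw [show (0:ℝ) = 0/d by simp]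
  rw [max_div_div_right hd.le]

private lemma max_div_neg (x d : ℝ) (hd : d < 0) : max (x/d) 0 = (max x 0 - x) / (-d) := by
  rcases le_total x 0 with h | h
  · rw [max_eq_left (div_nonneg_iff.mpr (Or.inr ⟨h, hd.le⟩)), max_eq_right h]
    field_simp
    ring
  · rw [max_eq_right (div_nonpos_iff.mpr (Or.inl ⟨h, hd.le⟩)), max_eq_left h]
    simp

private lemma shift_scale (G : ℝ → ℝ) (d e : ℝ) :
    ∫ t : ℝ, G (d*t + e) = |d⁻¹| * ∫ y : ℝ, G y := by
  rw [MeasureTheory.Measure.integral_comp_mul_left (fun y => G (y + e)) d,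
    MeasureTheory.integral_add_right_eq_self (fun y => G y) e, smul_eq_mul]

private lemma conv_eq_intervalIntegral (c : ℝ) (hc : 0 < c) (g : ℝ → ℝ) (s : ℝ) :
    conv1d (Mbox c) g s = (∫ t in (s - c)..s, g t) / c := by
  unfold conv1d Mbox
  have h1 : ∀ t : ℝ, (Set.Ico (0:ℝ) c).indicator (fun _ => 1 / c) t * g (s - t)
      = (Set.Ico (0:ℝ) c).indicator (fun t => 1 / c * g (s - t)) t := by
    intro t
    by_cases ht : t ∈ Set.Ico (0:ℝ) c <;> simp [Set.indicator_apply, ht]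
  simp_rw [h1]
  rw [MeasureTheory.integral_indicator measurableSet_Ico,
    MeasureTheory.integral_Ico_eq_integral_Ioo,
    ← MeasureTheory.integral_Ioc_eq_integral_Ioo,
    ← intervalIntegral.integral_of_le hc.le,
    intervalIntegral.integral_const_mul,
    intervalIntegral.integral_comp_sub_left (fun t => g t) s]
  rw [sub_zero]
  ring

private lemma integral_Mbox (τ : ℝ) (hτ : 0 < τ) (u v : ℝ) :
    ∫ x in u..v, Mbox τ x
      = ((max v 0 - max (v-τ) 0) - (max u 0 - max (u-τ) 0)) / τ := by
  have h1 : ∀ x : ℝ, Mbox τ x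
      = (1/τ) * (Set.Ico (0:ℝ) τ).indicator (fun _ => (1:ℝ)) x := by
    intro x
    by_cases hx : x ∈ Set.Ico (0:ℝ) τ <;> simp [Mbox, Set.indicator_apply, hx]
  simp_rw [h1]
  rw [intervalIntegral.integral_const_mul, integral_ind τ hτ]
  ring

private lemma conv2_closed (b τ : ℝ) (hb : 0 < b) (hτ : 0 < τ) (x : ℝ) :
    conv1d (Mbox b) (Mbox τ) x
      = ((max x 0 - max (x-τ) 0) - (max (x-b) 0 - max (x-b-τ) 0)) / (b*τ) := by
  rw [conv_eq_intervalIntegral b hb _ x, integral_Mbox τ hτ, div_div, mul_comm τ b]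

private lemma integral_combo (b τ u v : ℝ) :
    ∫ x in u..v, ((max x 0 - max (x-τ) 0) - (max (x-b) 0 - max (x-b-τ) 0))
      = (((max v 0)^2/2 - (max u 0)^2/2) - ((max (v-τ) 0)^2/2 - (max (u-τ) 0)^2/2))
        - (((max (v-b) 0)^2/2 - (max (u-b) 0)^2/2)
          - ((max (v-b-τ) 0)^2/2 - (max (u-b-τ) 0)^2/2)) := by
  have hbt : ∀ x : ℝ, x - b - τ = x - (b + τ) := fun x => by ring
  simp_rw [hbt]
  have c0 : Continuous fun x : ℝ => max x 0 := continuous_id.max continuous_const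
  have ck : ∀ k : ℝ, Continuous fun x : ℝ => max (x - k) 0 :=
    fun k => (continuous_id.sub continuous_const).max continuous_const
  rw [intervalIntegral.integral_sub (f := fun x : ℝ => max x 0 - max (x - τ) 0)
      (g := fun x : ℝ => max (x - b) 0 - max (x - (b + τ)) 0)
      ((c0.sub (ck τ) : Continuous fun x : ℝ => max x 0 - max (x - τ) 0).intervalIntegrable u v)
      (((ck b).sub (ck (b+τ)) : Continuous fun x : ℝ =>
        max (x - b) 0 - max (x - (b + τ)) 0).intervalIntegrable u v),
    intervalIntegral.integral_sub (c0.intervalIntegrable u v)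
      ((ck τ).intervalIntegrable u v),
    intervalIntegral.integral_sub ((ck b).intervalIntegrable u v)
      ((ck (b+τ)).intervalIntegrable u v),
    integral_max, integral_max_sub, integral_max_sub, integral_max_sub]

private lemma rhs1_closed (a b τ : ℝ) (ha : 0 < a) (hb : 0 < b) (hτ : 0 < τ) (w : ℝ) :
    conv1d (Mbox a) (conv1d (Mbox b) (Mbox τ)) w
      = ((max w 0)^2 - (max (w-τ) 0)^2 - (max (w-b) 0)^2 + (max (w-b-τ) 0)^2
        - (max (w-a) 0)^2 + (max (w-a-τ) 0)^2 + (max (w-a-b) 0)^2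
        - (max (w-a-b-τ) 0)^2) / (2*a*b*τ) := by
  rw [conv_eq_intervalIntegral a ha _ w]
  have hcong : (∫ t in (w-a)..w, conv1d (Mbox b) (Mbox τ) t)
      = ∫ t in (w-a)..w,
          ((max t 0 - max (t-τ) 0) - (max (t-b) 0 - max (t-b-τ) 0)) / (b*τ) :=
    intervalIntegral.integral_congr (fun t _ => conv2_closed b τ hb hτ t)
  rw [hcong]
  simp_rw [div_eq_inv_mul]
  rw [intervalIntegral.integral_const_mul, integral_combo]
  field_simp
  ring

/- ---------- left-hand side ---------- -/

private noncomputable def find : ℝ → ℝ :=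
  fun x => (Set.Ico (0:ℝ) 1).indicator (fun _ => (1:ℝ)) x

private lemma inner_eq (c d r : ℝ) (hc : c ≠ 0) (hd : d ≠ 0) (hcd : c^2 + d^2 = 1) :
    (∫ t : ℝ, (Set.Ico (0:ℝ) 1 ×ˢ Set.Ico (0:ℝ) 1).indicator (fun _ => (1:ℝ))
        (r • (d, -c) + t • (c, d)))
      = ((max (r+c) 0 - max (r+c-d) 0) - (max r 0 - max (r-d) 0)) / (c*d) := by
  have hsplit : ∀ x y : ℝ,
      (Set.Ico (0:ℝ) 1 ×ˢ Set.Ico (0:ℝ) 1).indicator (fun _ => (1:ℝ)) (x, y)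
        = find x * find y := by
    intro x y
    by_cases hx : x ∈ Set.Ico (0:ℝ) 1 <;> by_cases hy : y ∈ Set.Ico (0:ℝ) 1 <;>
      simp [find, Set.indicator_apply, Set.mem_prod, hx, hy]
  have step1 : (∫ t : ℝ, (Set.Ico (0:ℝ) 1 ×ˢ Set.Ico (0:ℝ) 1).indicator
        (fun _ => (1:ℝ)) (r • (d, -c) + t • (c, d)))
      = ∫ t : ℝ, (fun x => find ((c*x + r)/d) * find x) (d*t + -(r*c)) := by
    congr 1
    funext t
    have h0 : r • ((d:ℝ), -c) + t • ((c:ℝ), d) = (r*d + t*c, r*(-c) + t*d) := by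
      simp only [Prod.smul_mk, Prod.mk_add_mk, smul_eq_mul]
    rw [h0, hsplit]
    show find (r*d + t*c) * find (r*(-c) + t*d)
      = find ((c*(d*t + -(r*c)) + r)/d) * find (d*t + -(r*c))
    congr 2
    · rw [eq_div_iff hd]
      linear_combination r * hcd
    · ring
  rw [step1, shift_scale (fun x => find ((c*x + r)/d) * find x) d (-(r*c))]
  have step2 : (∫ x : ℝ, find ((c*x + r)/d) * find x)
      = ∫ x in (0:ℝ)..1, find ((c*x + r)/d) := by
    have h1 : ∀ x : ℝ, find ((c*x + r)/d) * find x
        = (Set.Ico (0:ℝ) 1).indicator (fun y => find ((c*y + r)/d)) x := by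
      intro x
      by_cases hx : x ∈ Set.Ico (0:ℝ) 1 <;>
        simp [find, Set.indicator_apply, hx]
    simp_rw [h1]
    rw [MeasureTheory.integral_indicator measurableSet_Ico,
      MeasureTheory.integral_Ico_eq_integral_Ioo,
      ← MeasureTheory.integral_Ioc_eq_integral_Ioo,
      ← intervalIntegral.integral_of_le (by norm_num : (0:ℝ) ≤ 1)]
  rw [step2]
  have h2 : ∀ x : ℝ, (c*x + r)/d = c/d*x + r/d := fun x => by field_simp
  simp_rw [h2]
  rw [intervalIntegral.integral_comp_mul_add find (div_ne_zero hc hd) (r/d),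
    smul_eq_mul, show c/d*0 + r/d = r/d by ring, show c/d*1 + r/d = c/d + r/d by ring]
  show |d⁻¹| * ((c/d)⁻¹ *
      ∫ x in (r/d)..(c/d + r/d), (Set.Ico (0:ℝ) 1).indicator (fun _ => (1:ℝ)) x) = _
  rw [integral_ind 1 one_pos]
  have e1 : c/d + r/d = (r+c)/d := by rw [← add_div, add_comm]
  have e2 : (r+c)/d - 1 = (r+c-d)/d := by field_simp
  have e3 : r/d - 1 = (r-d)/d := by field_simp
  rw [e1, e2, e3]
  rcases lt_or_gt_of_ne hd with hdn | hdp
  · rw [max_div_neg _ _ hdn, max_div_neg _ _ hdn, max_div_neg _ _ hdn,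
      max_div_neg _ _ hdn, abs_of_neg (inv_lt_zero.mpr hdn), inv_div]
    generalize max (r+c) 0 = M1
    generalize max (r+c-d) 0 = M2
    generalize max r 0 = M3
    generalize max (r-d) 0 = M4
    field_simp
    ring
  · rw [max_div_pos _ _ hdp, max_div_pos _ _ hdp, max_div_pos _ _ hdp,
      max_div_pos _ _ hdp, abs_of_pos (inv_pos.mpr hdp), inv_div]
    generalize max (r+c) 0 = M1
    generalize max (r+c-d) 0 = M2
    generalize max r 0 = M3
    generalize max (r-d) 0 = M4
    field_simp

private lemma integral_K (c d u v : ℝ) :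
    ∫ r in u..v, ((max (r+c) 0 - max (r+c-d) 0) - (max r 0 - max (r-d) 0))
      = (((max (v+c) 0)^2/2 - (max (u+c) 0)^2/2)
          - ((max (v+c-d) 0)^2/2 - (max (u+c-d) 0)^2/2))
        - (((max v 0)^2/2 - (max u 0)^2/2)
          - ((max (v-d) 0)^2/2 - (max (u-d) 0)^2/2)) := by
  have hcd' : ∀ r : ℝ, r + c - d = r + (c - d) := fun r => by ring
  simp_rw [hcd']
  have c0 : Continuous fun x : ℝ => max x 0 := continuous_id.max continuous_const
  have ck : ∀ k : ℝ, Continuous fun x : ℝ => max (x - k) 0 :=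
    fun k => (continuous_id.sub continuous_const).max continuous_const
  have ca : ∀ k : ℝ, Continuous fun x : ℝ => max (x + k) 0 :=
    fun k => (continuous_id.add continuous_const).max continuous_const
  rw [intervalIntegral.integral_sub (f := fun x : ℝ => max (x + c) 0 - max (x + (c - d)) 0)
      (g := fun x : ℝ => max x 0 - max (x - d) 0)
      (((ca c).sub (ca (c-d)) : Continuous fun x : ℝ =>
        max (x + c) 0 - max (x + (c - d)) 0).intervalIntegrable u v)
      ((c0.sub (ck d) : Continuous fun x : ℝ => max x 0 - max (x - d) 0).intervalIntegrable u v),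
    intervalIntegral.integral_sub ((ca c).intervalIntegrable u v)
      ((ca (c-d)).intervalIntegrable u v),
    intervalIntegral.integral_sub (c0.intervalIntegrable u v)
      ((ck d).intervalIntegrable u v),
    integral_max_add, integral_max_add, integral_max, integral_max_sub]

private lemma lhs_closed (c d τ s : ℝ) (hc : c ≠ 0) (hd : d ≠ 0)
    (hcd : c^2 + d^2 = 1) (hτ : 0 < τ) :
    (∫ r in (s - τ/2)..(s + τ/2),
        ∫ t : ℝ, (Set.Ico (0:ℝ) 1 ×ˢ Set.Ico (0:ℝ) 1).indicator (fun _ => (1:ℝ))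
          (r • (d, -c) + t • (c, d))) / τ
      = (((max (s+τ/2+c) 0)^2 - (max (s+τ/2+c-d) 0)^2 - (max (s+τ/2) 0)^2
          + (max (s+τ/2-d) 0)^2)
        - ((max (s-τ/2+c) 0)^2 - (max (s-τ/2+c-d) 0)^2 - (max (s-τ/2) 0)^2
          + (max (s-τ/2-d) 0)^2)) / (2*c*d*τ) := by
  have hcong : (∫ r in (s - τ/2)..(s + τ/2),
        ∫ t : ℝ, (Set.Ico (0:ℝ) 1 ×ˢ Set.Ico (0:ℝ) 1).indicator (fun _ => (1:ℝ))
          (r • (d, -c) + t • (c, d)))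
      = ∫ r in (s - τ/2)..(s + τ/2),
          ((max (r+c) 0 - max (r+c-d) 0) - (max r 0 - max (r-d) 0)) / (c*d) :=
    intervalIntegral.integral_congr (fun r _ => inner_eq c d r hc hd hcd)
  rw [hcong]
  simp_rw [div_eq_inv_mul]
  rw [intervalIntegral.integral_const_mul, integral_K]
  field_simp
  ring

/-- the parallel-beam projection of the pixel basis with box
detector blur of bin width `τ` is (up to a translation of the argument) the
3-direction box spline `M_{|sin θ|} * M_{|cos θ|} * M_τ`, given by the
second-order truncated-power formula `Δ_a Δ_b Δ_τ (·)₊² / (2abτ)`. -/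
theorem pixel_projection_with_blur_is_three_direction_box_spline
    (θ τ : ℝ) (hs : Real.sin θ ≠ 0) (hc : Real.cos θ ≠ 0) (hτ : 0 < τ) :
    ∃ shift : ℝ, ∀ s : ℝ,
      (∫ r in (s - τ / 2)..(s + τ / 2),
          ∫ t : ℝ, (Set.Ico (0:ℝ) 1 ×ˢ Set.Ico (0:ℝ) 1).indicator
            (fun _ => (1:ℝ))
            (r • (Real.sin θ, -Real.cos θ) + t • (Real.cos θ, Real.sin θ))) / τ
        = conv1d (Mbox |Real.sin θ|) (conv1d (Mbox |Real.cos θ|) (Mbox τ))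
            (s + shift) ∧
      (∫ r in (s - τ / 2)..(s + τ / 2),
          ∫ t : ℝ, (Set.Ico (0:ℝ) 1 ×ˢ Set.Ico (0:ℝ) 1).indicator
            (fun _ => (1:ℝ))
            (r • (Real.sin θ, -Real.cos θ) + t • (Real.cos θ, Real.sin θ))) / τ
        = diffOp |Real.sin θ| (diffOp |Real.cos θ| (diffOp τ
              (fun r => (max r 0) ^ 2))) (s + shift)
            / (2 * |Real.sin θ| * |Real.cos θ| * τ) := by
  have hcd : (Real.cos θ)^2 + (Real.sin θ)^2 = 1 := Real.cos_sq_add_sin_sq θ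
  have ha : (0:ℝ) < |Real.sin θ| := abs_pos.mpr hs
  have hb : (0:ℝ) < |Real.cos θ| := abs_pos.mpr hc
  rcases lt_or_gt_of_ne hs with hsn | hsp <;> rcases lt_or_gt_of_ne hc with hcn | hcp
  case inl.inl =>
    -- sin < 0, cos < 0 : shift = -sin θ + τ/2
    refine ⟨-Real.sin θ + τ/2, fun s => ?_⟩
    have h1 := lhs_closed (Real.cos θ) (Real.sin θ) τ s hc hs hcd hτ
    constructor
    · rw [h1, rhs1_closed _ _ _ ha hb hτ, abs_of_neg hsn, abs_of_neg hcn]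
      ring_nf
    · rw [h1]
      simp only [diffOp, abs_of_neg hsn, abs_of_neg hcn]
      ring_nf
  case inl.inr =>
    -- sin < 0, cos > 0 : shift = cos θ - sin θ + τ/2
    refine ⟨Real.cos θ - Real.sin θ + τ/2, fun s => ?_⟩
    have h1 := lhs_closed (Real.cos θ) (Real.sin θ) τ s hc hs hcd hτ
    constructor
    · rw [h1, rhs1_closed _ _ _ ha hb hτ, abs_of_neg hsn, abs_of_pos hcp]
      ring_nf
    · rw [h1]
      simp only [diffOp, abs_of_neg hsn, abs_of_pos hcp]
      ring_nf
  case inr.inl =>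
    -- sin > 0, cos < 0 : shift = τ/2
    refine ⟨τ/2, fun s => ?_⟩
    have h1 := lhs_closed (Real.cos θ) (Real.sin θ) τ s hc hs hcd hτ
    constructor
    · rw [h1, rhs1_closed _ _ _ ha hb hτ, abs_of_pos hsp, abs_of_neg hcn]
      ring_nf
    · rw [h1]
      simp only [diffOp, abs_of_pos hsp, abs_of_neg hcn]
      ring_nf
  case inr.inr =>
    -- sin > 0, cos > 0 : shift = cos θ + τ/2
    refine ⟨Real.cos θ + τ/2, fun s => ?_⟩
    have h1 := lhs_closed (Real.cos θ) (Real.sin θ) τ s hc hs hcd hτ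
    constructor
    · rw [h1, rhs1_closed _ _ _ ha hb hτ, abs_of_pos hsp, abs_of_pos hcp]
      ring_nf
    · rw [h1]
      simp only [diffOp, abs_of_pos hsp, abs_of_pos hcp]
      ring_nf
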